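/- Let α : {1,…,d} → ℂ, let Φ_1,…,Φ_d be unit vectors in ℂ^m, let Ψ_1,…,Ψ_d be orthonormal vectors in ℂ^m, and let γ : {1,…,d}×{1,…,d} → ℂ satisfy γ_{ii} = 1 and γ_{ji} = conj(γ_{ij}). Define the matrices on ℂ^d ⊗ ℂ^m (indexed by pairs): ρ((i,k),(j,l)) = α_i · conj(α_j) · γ_{ij} · Φ_i(k) · conj(Φ_j(l)) and σ((i,k),(j,l)) = δ_{ij} · |α_i|² · Ψ_i(k) · conj(Ψ_i(l)). Then Re Tr((ρ − σ)²) = 2 ∑_{i=1}^d |α_i|⁴ (1 − |⟨Φ_i, Ψ_i⟩|²) + ∑_{i≠j} |α_i|² |α_j|² |γ_{ij}|². -/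

import Mathlib

open Matrix BigOperators

noncomputable section

/-- Standard Hermitian inner product on `Fin m → ℂ` (conjugate-linear in the first slot). -/
def cinner {m : ℕ} (u v : Fin m → ℂ) : ℂ :=
  ∑ k, (starRingEnd ℂ) (u k) * v k

lemma factor_sum {m : ℕ} (c : ℂ) (f g : Fin m → ℂ) :
    ∑ k, ∑ l, c * f k * g l = c * ((∑ k, f k) * (∑ l, g l)) := by
  rw [Finset.sum_mul_sum, Finset.mul_sum]
  refine Finset.sum_congr rfl fun k _ => ?_
  rw [Finset.mul_sum]
  exact Finset.sum_congr rfl fun l _ => by ring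

lemma trace_mul_expand {d m : ℕ} (A B : Matrix (Fin d × Fin m) (Fin d × Fin m) ℂ) :
    (A * B).trace = ∑ i, ∑ j, ∑ k, ∑ l, A (i,k) (j,l) * B (j,l) (i,k) := by
  rw [Matrix.trace]
  simp only [Matrix.diag, Matrix.mul_apply, Fintype.sum_prod_type]
  exact Finset.sum_congr rfl fun i _ => Finset.sum_comm

lemma mc (z : ℂ) : z * (starRingEnd ℂ) z = ((‖z‖ ^ 2 : ℝ) : ℂ) := by
  rw [Complex.mul_conj, Complex.sq_norm]

lemma cm (z : ℂ) : (starRingEnd ℂ) z * z = ((‖z‖ ^ 2 : ℝ) : ℂ) := by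
  rw [mul_comm, mc]

/-- The exact Frobenius-distance identity (proof of the appendix Lemma):
`Tr (ρ − σ)² = 2 ∑ᵢ |αᵢ|⁴ (1 − |⟨Φᵢ,Ψᵢ⟩|²) + ∑_{i≠j} |αᵢ|² |αⱼ|² |γᵢⱼ|²`. -/
theorem stmt_13 {d m : ℕ} (α : Fin d → ℂ) (Φ Ψ : Fin d → Fin m → ℂ)
    (hΦ : ∀ i, cinner (Φ i) (Φ i) = 1)
    (hΨ : ∀ i j, cinner (Ψ i) (Ψ j) = if i = j then 1 else 0)
    (γ : Fin d → Fin d → ℂ)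
    (hγdiag : ∀ i, γ i i = 1)
    (hγherm : ∀ i j, γ j i = (starRingEnd ℂ) (γ i j))
    (ρ σ : Matrix (Fin d × Fin m) (Fin d × Fin m) ℂ)
    (hρ : ρ = Matrix.of fun p q =>
      α p.1 * (starRingEnd ℂ) (α q.1) * γ p.1 q.1 * Φ p.1 p.2 * (starRingEnd ℂ) (Φ q.1 q.2))
    (hσ : σ = Matrix.of fun p q =>
      if p.1 = q.1 then ((‖α p.1‖ : ℂ))^2 * Ψ p.1 p.2 * (starRingEnd ℂ) (Ψ p.1 q.2)
      else 0) :
    ((((ρ - σ) * (ρ - σ)).trace)).re =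
      2 * ∑ i, (‖α i‖)^4 * (1 - (‖cinner (Φ i) (Ψ i)‖)^2)
      + ∑ i, ∑ j, if i ≠ j then
          (‖α i‖)^2 * (‖α j‖)^2 * (‖γ i j‖)^2
        else 0 := by
  have hΦ' : ∀ i, (∑ k, (starRingEnd ℂ) (Φ i k) * Φ i k) = 1 := hΦ
  have hΨ' : ∀ i, (∑ k, (starRingEnd ℂ) (Ψ i k) * Ψ i k) = 1 := by
    intro i; have := hΨ i i; simpa [cinner] using this
  have hconj : ∀ i, (∑ k, Φ i k * (starRingEnd ℂ) (Ψ i k))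
      = (starRingEnd ℂ) (cinner (Φ i) (Ψ i)) := by
    intro i
    rw [cinner, map_sum]
    exact Finset.sum_congr rfl fun k _ => by
      rw [_root_.map_mul, Complex.conj_conj]
  -- trace of ρ*ρ
  have L1 : (ρ * ρ).trace =
      ((∑ i, ∑ j, (‖α i‖)^2 * (‖α j‖)^2 * (‖γ i j‖)^2 : ℝ) : ℂ) := by
    rw [trace_mul_expand]
    push_cast
    refine Finset.sum_congr rfl fun i _ => Finset.sum_congr rfl fun j _ => ?_
    have step : ∑ k, ∑ l, ρ (i,k) (j,l) * ρ (j,l) (i,k)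
        = (α i * (starRingEnd ℂ) (α i) * (α j * (starRingEnd ℂ) (α j)) * (γ i j * γ j i))
          * ((∑ k, (starRingEnd ℂ) (Φ i k) * Φ i k) * (∑ l, (starRingEnd ℂ) (Φ j l) * Φ j l)) := by
      rw [← factor_sum]
      refine Finset.sum_congr rfl fun k _ => Finset.sum_congr rfl fun l _ => ?_
      simp only [hρ, Matrix.of_apply]
      ring
    rw [step, hΦ', hΦ', hγherm i j, mc (α i), mc (α j), mc (γ i j)]
    push_cast
    ring
  -- trace of σ*σ
  have L4 : (σ * σ).trace = ((∑ i, (‖α i‖)^4 : ℝ) : ℂ) := by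
    rw [trace_mul_expand]
    push_cast
    refine Finset.sum_congr rfl fun i _ => ?_
    rw [Finset.sum_eq_single i]
    · have step : ∑ k, ∑ l, σ (i,k) (i,l) * σ (i,l) (i,k)
          = (((‖α i‖ : ℂ))^2 * ((‖α i‖ : ℂ))^2)
            * ((∑ k, (starRingEnd ℂ) (Ψ i k) * Ψ i k) * (∑ l, (starRingEnd ℂ) (Ψ i l) * Ψ i l)) := by
        rw [← factor_sum]
        refine Finset.sum_congr rfl fun k _ => Finset.sum_congr rfl fun l _ => ?_
        simp only [hσ, Matrix.of_apply, if_pos rfl, if_true]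
        ring
      rw [step, hΨ']
      push_cast
      ring
    · intro j _ hji
      apply Finset.sum_eq_zero; intro k _
      apply Finset.sum_eq_zero; intro l _
      simp [hσ, hji]
    · intro h; exact absurd (Finset.mem_univ i) h
  -- trace of ρ*σ
  have L2 : (ρ * σ).trace =
      ((∑ i, (‖α i‖)^4 * (‖cinner (Φ i) (Ψ i)‖)^2 : ℝ) : ℂ) := by
    rw [trace_mul_expand]
    push_cast
    refine Finset.sum_congr rfl fun i _ => ?_
    rw [Finset.sum_eq_single i]
    · have step : ∑ k, ∑ l, ρ (i,k) (i,l) * σ (i,l) (i,k)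
          = (α i * (starRingEnd ℂ) (α i) * γ i i * ((‖α i‖ : ℂ))^2)
            * ((∑ k, Φ i k * (starRingEnd ℂ) (Ψ i k)) * (∑ l, (starRingEnd ℂ) (Φ i l) * Ψ i l)) := by
        rw [← factor_sum]
        refine Finset.sum_congr rfl fun k _ => Finset.sum_congr rfl fun l _ => ?_
        simp only [hρ, hσ, Matrix.of_apply, if_pos rfl, if_true]
        ring
      have hcin : (∑ l, (starRingEnd ℂ) (Φ i l) * Ψ i l) = cinner (Φ i) (Ψ i) := rfl
      rw [step, hconj, hcin, hγdiag, mc (α i), cm (cinner (Φ i) (Ψ i))]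
      push_cast
      ring
    · intro j _ hji
      apply Finset.sum_eq_zero; intro k _
      apply Finset.sum_eq_zero; intro l _
      simp [hσ, hji]
    · intro h; exact absurd (Finset.mem_univ i) h
  -- trace of σ*ρ
  have L3 : (σ * ρ).trace =
      ((∑ i, (‖α i‖)^4 * (‖cinner (Φ i) (Ψ i)‖)^2 : ℝ) : ℂ) := by
    rw [trace_mul_expand]
    push_cast
    refine Finset.sum_congr rfl fun i _ => ?_
    rw [Finset.sum_eq_single i]
    · have step : ∑ k, ∑ l, σ (i,k) (i,l) * ρ (i,l) (i,k)
          = (((‖α i‖ : ℂ))^2 * (α i * (starRingEnd ℂ) (α i) * γ i i))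
            * ((∑ k, (starRingEnd ℂ) (Φ i k) * Ψ i k) * (∑ l, Φ i l * (starRingEnd ℂ) (Ψ i l))) := by
        rw [← factor_sum]
        refine Finset.sum_congr rfl fun k _ => Finset.sum_congr rfl fun l _ => ?_
        simp only [hρ, hσ, Matrix.of_apply, if_pos rfl, if_true]
        ring
      have hcin : (∑ k, (starRingEnd ℂ) (Φ i k) * Ψ i k) = cinner (Φ i) (Ψ i) := rfl
      rw [step, hconj, hcin, hγdiag, mc (α i), mc (cinner (Φ i) (Ψ i))]
      push_cast
      ring
    · intro j _ hji
      apply Finset.sum_eq_zero; intro k _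
      apply Finset.sum_eq_zero; intro l _
      simp [hσ, Ne.symm hji]
    · intro h; exact absurd (Finset.mem_univ i) h
  have expand : ((ρ - σ) * (ρ - σ)).trace
      = (ρ * ρ).trace - (ρ * σ).trace - (σ * ρ).trace + (σ * σ).trace := by
    rw [sub_mul, mul_sub, mul_sub, Matrix.trace_sub, Matrix.trace_sub, Matrix.trace_sub]
    ring
  rw [expand, L1, L2, L3, L4, ← Complex.ofReal_sub, ← Complex.ofReal_sub,
    ← Complex.ofReal_add, Complex.ofReal_re]
  -- pure real identity
  have split : (∑ i, ∑ j, (‖α i‖)^2 * (‖α j‖)^2 * (‖γ i j‖)^2 : ℝ)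
      = (∑ i, (‖α i‖)^4)
        + ∑ i, ∑ j, if i ≠ j then
            (‖α i‖)^2 * (‖α j‖)^2 * (‖γ i j‖)^2 else 0 := by
    rw [← Finset.sum_add_distrib]
    refine Finset.sum_congr rfl fun i _ => ?_
    have tr : (∑ j, (‖α i‖)^2 * (‖α j‖)^2 * (‖γ i j‖)^2)
        = ∑ j, ((if i = j then (‖α i‖)^2 * (‖α j‖)^2 * (‖γ i j‖)^2 else 0)
          + (if i ≠ j then (‖α i‖)^2 * (‖α j‖)^2 * (‖γ i j‖)^2 else 0)) :=
      Finset.sum_congr rfl fun j _ => by by_cases h : i = j <;> simp [h]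
    rw [tr, Finset.sum_add_distrib, Finset.sum_ite_eq]
    simp [hγdiag]
    ring
  rw [split]
  rw [Finset.mul_sum]
  have : ∀ i : Fin d, 2 * ((‖α i‖)^4 * (1 - (‖cinner (Φ i) (Ψ i)‖)^2))
      = (‖α i‖)^4 - (‖α i‖)^4 * (‖cinner (Φ i) (Ψ i)‖)^2
        - (‖α i‖)^4 * (‖cinner (Φ i) (Ψ i)‖)^2 + (‖α i‖)^4 := by
    intro i; ring
  simp only [this]
  rw [Finset.sum_add_distrib, Finset.sum_sub_distrib, Finset.sum_sub_distrib]
  ring
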